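/- Let f(z) = z h(z) conj(g(z)) be a logharmonic mapping on U with h(0)=g(0)=1 and φ(z) = z h(z) g(z) typically real, with second dilatation a having real Taylor coefficients (a(conj z) = conj(a(z))). Then f has real coefficients in the sense f(conj(z)) = conj(f(z)) for all z ∈ U; in particular f(U) is symmetric with respect to the real axis. -/

import Mathlib

open Complex Metric

/-- Wirtinger derivative ∂/∂z of a real-differentiable map. -/
noncomputable def wDeriv (f : ℂ → ℂ) (z : ℂ) : ℂ :=
  (fderiv ℝ f z 1 - Complex.I * fderiv ℝ f z Complex.I) / 2

/-- Wirtinger derivative ∂/∂z̄ of a real-differentiable map. -/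
noncomputable def wDerivBar (f : ℂ → ℂ) (z : ℂ) : ℂ :=
  (fderiv ℝ f z 1 + Complex.I * fderiv ℝ f z Complex.I) / 2

/-- φ is typically real on the unit disk. -/
def TypicallyReal (φ : ℂ → ℂ) : Prop :=
  (∀ z ∈ ball (0 : ℂ) 1, z.im = 0 → (φ z).im = 0) ∧
  (∀ z ∈ ball (0 : ℂ) 1, z.im ≠ 0 → 0 < z.im * (φ z).im)

lemma hasDerivAt_conj_conj {g : ℂ → ℂ} {d z : ℂ}
    (hg : HasDerivAt g d ((starRingEnd ℂ) z)) :
    HasDerivAt (fun w => (starRingEnd ℂ) (g ((starRingEnd ℂ) w))) ((starRingEnd ℂ) d) z := by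
  have hC : ∀ x : ℂ, HasFDerivAt (fun w : ℂ => (starRingEnd ℂ) w)
      (Complex.conjCLE.toContinuousLinearMap) x := by
    intro x
    exact Complex.conjCLE.toContinuousLinearMap.hasFDerivAt
  have h1 : HasFDerivAt (fun w : ℂ => g ((starRingEnd ℂ) w))
      ((((1 : ℂ →L[ℂ] ℂ).smulRight d).restrictScalars ℝ).comp
        Complex.conjCLE.toContinuousLinearMap) z := by
    have hg' : HasFDerivAt g (((1 : ℂ →L[ℂ] ℂ).smulRight d).restrictScalars ℝ)
        ((starRingEnd ℂ) z) := hg.hasFDerivAt.restrictScalars ℝ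
    exact hg'.comp z (hC z)
  have h2 := (hC _).comp z h1
  have h3 : HasFDerivAt (fun w => (starRingEnd ℂ) (g ((starRingEnd ℂ) w)))
      (((1 : ℂ →L[ℂ] ℂ).smulRight ((starRingEnd ℂ) d)).restrictScalars ℝ) z := by
    refine HasFDerivAt.congr_fderiv h2 ?_
    ext v
    simp [mul_comm]
  rw [hasDerivAt_iff_isLittleO]
  simpa [smul_eq_mul, mul_comm] using h3.isLittleO

lemma wderiv_pair {c₁ c₂ : ℂ → ℂ} {z : ℂ}
    (h₁ : DifferentiableAt ℂ c₁ z) (h₂ : DifferentiableAt ℂ c₂ z) :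
    wDeriv (fun w => c₁ w * (starRingEnd ℂ) (c₂ w)) z
      = deriv c₁ z * (starRingEnd ℂ) (c₂ z) ∧
    wDerivBar (fun w => c₁ w * (starRingEnd ℂ) (c₂ w)) z
      = c₁ z * (starRingEnd ℂ) (deriv c₂ z) := by
  have hA : HasFDerivAt c₁ (((1 : ℂ →L[ℂ] ℂ).smulRight (deriv c₁ z)).restrictScalars ℝ) z :=
    h₁.hasDerivAt.hasFDerivAt.restrictScalars ℝ
  have hB : HasFDerivAt (fun w => (starRingEnd ℂ) (c₂ w))
      (Complex.conjCLE.toContinuousLinearMap.comp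
        (((1 : ℂ →L[ℂ] ℂ).smulRight (deriv c₂ z)).restrictScalars ℝ)) z :=
    Complex.conjCLE.toContinuousLinearMap.hasFDerivAt.comp z
      (h₂.hasDerivAt.hasFDerivAt.restrictScalars ℝ)
  have hF := hA.mul hB
  have hfd : fderiv ℝ (fun w => c₁ w * (starRingEnd ℂ) (c₂ w)) z = _ := hF.fderiv
  constructor
  · rw [wDeriv, hfd]
    simp [smul_eq_mul, mul_comm, mul_assoc]
    ring_nf
    rw [Complex.I_sq]
    ring
  · rw [wDerivBar, hfd]
    simp [smul_eq_mul, mul_comm, mul_assoc]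
    ring_nf
    rw [Complex.I_sq]
    ring

theorem symmetric_image
    (h g a : ℂ → ℂ)
    (hh : DifferentiableOn ℂ h (ball (0 : ℂ) 1))
    (hg : DifferentiableOn ℂ g (ball (0 : ℂ) 1))
    (ha : DifferentiableOn ℂ a (ball (0 : ℂ) 1))
    (hh0 : ∀ z ∈ ball (0 : ℂ) 1, h z ≠ 0)
    (hg0 : ∀ z ∈ ball (0 : ℂ) 1, g z ≠ 0)
    (hhone : h 0 = 1) (hgone : g 0 = 1)
    (hamap : ∀ z ∈ ball (0 : ℂ) 1, ‖a z‖ < 1)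
    (ha1 : ∀ z ∈ ball (0 : ℂ) 1, a z ≠ -1)
    (haR : ∀ z ∈ ball (0 : ℂ) 1, a ((starRingEnd ℂ) z) = (starRingEnd ℂ) (a z))
    (f : ℂ → ℂ) (hf : ∀ z, f z = z * h z * (starRingEnd ℂ) (g z))
    (hlh : ∀ z ∈ ball (0 : ℂ) 1,
      (starRingEnd ℂ) (wDerivBar f z / f z) = a z * (wDeriv f z / f z))
    (φ : ℂ → ℂ) (hφ : ∀ z, φ z = z * h z * g z)
    (hTR : TypicallyReal φ) :
    ∀ z ∈ ball (0 : ℂ) 1, f ((starRingEnd ℂ) z) = (starRingEnd ℂ) (f z) := by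
  set B := ball (0 : ℂ) 1 with hB
  have memc : ∀ z ∈ B, (starRingEnd ℂ) z ∈ B := by
    intro z hz
    simpa [hB, mem_ball_zero_iff] using mem_ball_zero_iff.mp hz
  have hhd : ∀ z ∈ B, DifferentiableAt ℂ h z :=
    fun z hz => hh.differentiableAt (isOpen_ball.mem_nhds hz)
  have hgd : ∀ z ∈ B, DifferentiableAt ℂ g z :=
    fun z hz => hg.differentiableAt (isOpen_ball.mem_nhds hz)
  set H : ℂ → ℂ := fun w => (starRingEnd ℂ) (h ((starRingEnd ℂ) w)) with hHdef
  set G : ℂ → ℂ := fun w => (starRingEnd ℂ) (g ((starRingEnd ℂ) w)) with hGdef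
  have hHd : ∀ z ∈ B, HasDerivAt H ((starRingEnd ℂ) (deriv h ((starRingEnd ℂ) z))) z :=
    fun z hz => hasDerivAt_conj_conj (hhd _ (memc z hz)).hasDerivAt
  have hGd : ∀ z ∈ B, HasDerivAt G ((starRingEnd ℂ) (deriv g ((starRingEnd ℂ) z))) z :=
    fun z hz => hasDerivAt_conj_conj (hgd _ (memc z hz)).hasDerivAt
  have hH0 : ∀ z ∈ B, H z ≠ 0 := by
    intro z hz
    simp only [hHdef, ne_eq, map_eq_zero]
    exact hh0 _ (memc z hz)
  have hG0 : ∀ z ∈ B, G z ≠ 0 := by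
    intro z hz
    simp only [hGdef, ne_eq, map_eq_zero]
    exact hg0 _ (memc z hz)
  -- Step 1: the basic differential relation for g, h
  have E1 : ∀ z ∈ B, z ≠ 0 →
      deriv g z * (z * h z) = a z * (h z + z * deriv h z) * g z := by
    intro z hz hz0
    have hc1 : HasDerivAt (fun w => w * h w) (1 * h z + z * deriv h z) z :=
      (hasDerivAt_id z).mul (hhd z hz).hasDerivAt
    have hder : deriv (fun w => w * h w) z = h z + z * deriv h z := by
      simpa using hc1.deriv
    have hfun : f = fun w => (w * h w) * (starRingEnd ℂ) (g w) := funext hf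
    have hw := wderiv_pair (c₁ := fun w => w * h w) (c₂ := g) hc1.differentiableAt (hgd z hz)
    have hwd : wDeriv f z = (h z + z * deriv h z) * (starRingEnd ℂ) (g z) := by
      rw [hfun, hw.1, hder]
    have hwb : wDerivBar f z = (z * h z) * (starRingEnd ℂ) (deriv g z) := by
      rw [hfun, hw.2]
    have key := hlh z hz
    rw [hwd, hwb, hf z] at key
    have hhz := hh0 z hz
    have hgz := hg0 z hz
    have hgcz : (starRingEnd ℂ) (g z) ≠ 0 := by simpa [map_eq_zero] using hgz
    have hzh : z * h z ≠ 0 := mul_ne_zero hz0 hhz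
    have e1 : z * h z * (starRingEnd ℂ) (g z) = (z * h z) * (starRingEnd ℂ) (g z) := by ring
    rw [e1, mul_div_mul_left _ _ hzh, mul_div_mul_right _ _ hgcz, map_div₀] at key
    simp only [Complex.conj_conj] at key
    field_simp at key
    linear_combination key
  -- Step 2: φ is symmetric w.r.t. conjugation, hence H*G = h*g
  have hφd : DifferentiableOn ℂ φ B := by
    have : φ = fun w => w * h w * g w := funext hφ
    rw [this]
    exact (differentiable_id.differentiableOn.mul hh).mul hg
  have hψd : ∀ z ∈ B, HasDerivAt (fun w => (starRingEnd ℂ) (φ ((starRingEnd ℂ) w)))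
      ((starRingEnd ℂ) (deriv φ ((starRingEnd ℂ) z))) z := by
    intro z hz
    exact hasDerivAt_conj_conj (hφd.differentiableAt (isOpen_ball.mem_nhds (memc z hz))).hasDerivAt
  have hφa : AnalyticOnNhd ℂ φ B := hφd.analyticOnNhd isOpen_ball
  have hψa : AnalyticOnNhd ℂ (fun w => (starRingEnd ℂ) (φ ((starRingEnd ℂ) w))) B :=
    DifferentiableOn.analyticOnNhd
      (fun z hz => ((hψd z hz).differentiableAt).differentiableWithinAt) isOpen_ball
  have hfreq : ∃ᶠ w in nhdsWithin (0:ℂ) {(0:ℂ)}ᶜ,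
      φ w = (starRingEnd ℂ) (φ ((starRingEnd ℂ) w)) := by
    rw [Filter.frequently_iff]
    intro U hU
    rcases Metric.mem_nhdsWithin_iff.mp hU with ⟨ε, hε, hsub⟩
    set r : ℝ := min ε 1 / 2 with hr
    have hr0 : 0 < r := by positivity
    have hrε : r < ε := by
      have : min ε 1 ≤ ε := min_le_left _ _
      simp only [hr]; linarith
    have hr1 : r < 1 := by
      have : min ε 1 ≤ 1 := min_le_right _ _
      simp only [hr]; linarith
    refine ⟨(r : ℂ), hsub ⟨?_, ?_⟩, ?_⟩
    · simp only [mem_ball, dist_zero_right, Complex.norm_real, Real.norm_eq_abs]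
      rwa [abs_of_pos hr0]
    · simp only [Set.mem_compl_iff, Set.mem_singleton_iff]
      exact_mod_cast hr0.ne'
    · have hmem : (r : ℂ) ∈ B := by
        simp only [hB, mem_ball_zero_iff, Complex.norm_real, Real.norm_eq_abs]
        rwa [abs_of_pos hr0]
      have him : ((r : ℂ)).im = 0 := Complex.ofReal_im r
      have hreal := hTR.1 _ hmem him
      have h1 : (starRingEnd ℂ) ((r : ℂ)) = (r : ℂ) := Complex.conj_ofReal r
      rw [h1, Complex.conj_eq_iff_im.mpr hreal]
  have hEqφ := hφa.eqOn_of_preconnected_of_frequently_eq hψa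
      (convex_ball (0:ℂ) 1).isPreconnected (mem_ball_self one_pos) hfreq
  have hPsym : ∀ z ∈ B, H z * G z = h z * g z := by
    intro z hz
    by_cases hz0 : z = 0
    · simp [hHdef, hGdef, hz0, hhone, hgone]
    · have h1 : φ z = (starRingEnd ℂ) (φ ((starRingEnd ℂ) z)) := hEqφ hz
      rw [hφ z, hφ ((starRingEnd ℂ) z)] at h1
      simp only [map_mul, Complex.conj_conj] at h1
      have h3 : z * (h z * g z) = z * (H z * G z) := by
        simp only [hHdef, hGdef]
        linear_combination h1
      exact (mul_left_cancel₀ hz0 h3).symm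
  -- Step 3: conjugated differential relation for G, H
  have E1c : ∀ z ∈ B, z ≠ 0 →
      deriv G z * (z * H z) = a z * (H z + z * deriv H z) * G z := by
    intro z hz hz0
    have hwz : (starRingEnd ℂ) z ∈ B := memc z hz
    have hwz0 : (starRingEnd ℂ) z ≠ 0 := by simpa [map_eq_zero] using hz0
    have h1 := E1 _ hwz hwz0
    have h2 := congrArg (starRingEnd ℂ) h1
    simp only [map_mul, map_add, Complex.conj_conj] at h2
    have hdG : deriv G z = (starRingEnd ℂ) (deriv g ((starRingEnd ℂ) z)) := (hGd z hz).deriv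
    have hdH : deriv H z = (starRingEnd ℂ) (deriv h ((starRingEnd ℂ) z)) := (hHd z hz).deriv
    have haz : (starRingEnd ℂ) (a ((starRingEnd ℂ) z)) = a z := by
      rw [haR z hz, Complex.conj_conj]
    rw [haz] at h2
    rw [hdG, hdH]
    simp only [hHdef, hGdef]
    linear_combination h2
  -- Step 4: derivative of the product relation
  have E3 : ∀ z ∈ B, deriv H z * G z + H z * deriv G z
      = deriv h z * g z + h z * deriv g z := by
    intro z hz
    have heq : (fun w => H w * G w) =ᶠ[nhds z] (fun w => h w * g w) :=
      Filter.eventuallyEq_of_mem (isOpen_ball.mem_nhds hz) hPsym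
    have e1 : deriv (fun w => H w * G w) z = deriv (fun w => h w * g w) z :=
      heq.deriv_eq
    change deriv (H * G) z = deriv (h * g) z at e1
    rw [((hHd z hz).mul (hGd z hz)).deriv, ((hhd z hz).hasDerivAt.mul (hgd z hz).hasDerivAt).deriv]
      at e1
    rw [← (hHd z hz).deriv, ← (hGd z hz).deriv] at e1
    exact e1
  -- Step 5: deriv G * g = deriv g * G, first off 0, then everywhere
  have hGg0 : ∀ z ∈ B, z ≠ 0 → deriv G z * g z = deriv g z * G z := by
    intro z hz hz0
    have hA := E1 z hz hz0
    have hBc := E1c z hz hz0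
    have hC := E3 z hz
    have hD := hPsym z hz
    have key : ((1 + a z) * (deriv G z * g z - deriv g z * G z)) * (z * h z * H z) = 0 := by
      linear_combination (-(G z * H z)) * hA + (g z * h z) * hBc + (a z * z * g z * h z) * hC
        + (-(a z * deriv h z * g z * z) - a z * z * h z * deriv g z) * hD
    have hne : z * h z * H z ≠ 0 := mul_ne_zero (mul_ne_zero hz0 (hh0 z hz)) (hH0 z hz)
    have h1a : (1 + a z) ≠ 0 := by
      intro hco
      exact ha1 z hz (by linear_combination hco)
    have := (mul_eq_zero.mp key).resolve_right hne
    have := (mul_eq_zero.mp this).resolve_left h1a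
    exact sub_eq_zero.mp this
  -- Step 6: extend to all of B by the identity theorem
  have hGdiff : DifferentiableOn ℂ G B := fun z hz => (hGd z hz).differentiableAt.differentiableWithinAt
  have hGa : AnalyticOnNhd ℂ (fun z => deriv G z * g z) B :=
    ((hGdiff.analyticOnNhd isOpen_ball).deriv).mul (hg.analyticOnNhd isOpen_ball)
  have hga : AnalyticOnNhd ℂ (fun z => deriv g z * G z) B :=
    ((hg.analyticOnNhd isOpen_ball).deriv).mul (hGdiff.analyticOnNhd isOpen_ball)
  have hhalf : ((1/2 : ℝ) : ℂ) ∈ B := by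
    simp only [hB, mem_ball_zero_iff]
    rw [Complex.norm_real]
    norm_num
  have hfreq2 : ∃ᶠ w in nhdsWithin ((1/2 : ℝ) : ℂ) {((1/2 : ℝ) : ℂ)}ᶜ,
      deriv G w * g w = deriv g w * G w := by
    apply Filter.Eventually.frequently
    apply Filter.Eventually.filter_mono nhdsWithin_le_nhds
    have hmem : (B ∩ {(0:ℂ)}ᶜ) ∈ nhds ((1/2 : ℝ) : ℂ) := by
      apply (isOpen_ball.inter isOpen_compl_singleton).mem_nhds
      refine ⟨hhalf, ?_⟩
      simp only [Set.mem_compl_iff, Set.mem_singleton_iff]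
      intro hc
      have := congrArg Complex.re hc
      simp only [Complex.ofReal_re, Complex.zero_re] at this
      norm_num at this
    filter_upwards [hmem] with w hw
    exact hGg0 w hw.1 hw.2
  have hEq2 := hGa.eqOn_of_preconnected_of_frequently_eq hga
      (convex_ball (0:ℂ) 1).isPreconnected hhalf hfreq2
  -- Step 7: G/g is constant equal to 1, so G = g on B
  have hGeq : ∀ z ∈ B, G z = g z := by
    have hWdiff : DifferentiableOn ℂ (fun w => G w / g w) B := fun z hz =>
      ((hGd z hz).differentiableAt.div (hgd z hz) (hg0 z hz)).differentiableWithinAt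
    have hW0 : ∀ z ∈ B, fderivWithin ℂ (fun w => G w / g w) B z = 0 := by
      intro z hz
      have hdW := (hGd z hz).div (hgd z hz).hasDerivAt (hg0 z hz)
      rw [← (hGd z hz).deriv] at hdW
      have hnum : deriv G z * g z - G z * deriv g z = 0 := by
        have := hEq2 hz
        simp only at this
        linear_combination this
      rw [hnum, zero_div] at hdW
      have : fderivWithin ℂ (fun w => G w / g w) B z = _ := hdW.hasFDerivAt.hasFDerivWithinAt.fderivWithin (isOpen_ball.uniqueDiffWithinAt hz)
      rw [this]
      ext v
      simp
    intro z hz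
    have hconst := (convex_ball (0:ℂ) 1).is_const_of_fderivWithin_eq_zero hWdiff hW0 hz
      (mem_ball_self one_pos)
    have hW1 : G 0 / g 0 = 1 := by
      simp [hGdef, hgone]
    rw [hW1] at hconst
    exact (div_eq_one_iff_eq (hg0 z hz)).mp hconst
  have hHeq : ∀ z ∈ B, H z = h z := by
    intro z hz
    have h1 := hPsym z hz
    rw [hGeq z hz] at h1
    exact mul_right_cancel₀ (hg0 z hz) h1
  -- Conclusion
  intro z hz
  have hgsym : (starRingEnd ℂ) (g ((starRingEnd ℂ) z)) = g z := hGeq z hz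
  have hhsym : (starRingEnd ℂ) (h ((starRingEnd ℂ) z)) = h z := hHeq z hz
  have hh' : h ((starRingEnd ℂ) z) = (starRingEnd ℂ) (h z) := by
    rw [← hhsym, Complex.conj_conj]
  rw [hf ((starRingEnd ℂ) z), hf z, hh', hgsym]
  simp only [map_mul, Complex.conj_conj]
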